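/- arXiv:1302.3652 — 4 statements merged into one kernel-verified Lean document; each statement's English description precedes it below -/
import Mathlib

section
/- Let g = [[a,b],[c,d]] ∈ SL(2,ℂ) with c ≠ 0, let q = z + t·j with z ∈ ℂ, t > 0, and write g•q = z′ + t′·j. Set λ = |cz + d|² + |c|²·t². Then |a − c·z′|² + |c|²·t′² = 1/λ. Consequently: if q lies on the isometric sphere I(g) (i.e. λ = 1), then g•q lies on the isometric sphere I(g⁻¹) (i.e. |a − c·z′|² + |c|²·t′² = 1), and if q lies in the open half-ball B(g) bounded by I(g) (i.e. λ < 1), then g•q lies in the exterior of the closed half-ball bounded by I(g⁻¹) (i.e. |a − c·z′|² + |c|²·t′² > 1). Thus g takes I(g) to I(g⁻¹), sending the half-space B(g) to the exterior of B(g⁻¹). -/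
noncomputable section

/-- The embedding of `ℂ` into the quaternions `ℍ = Quaternion ℝ`,
sending `x + iy` to `⟨x, y, 0, 0⟩`. -/
def toQ (z : ℂ) : Quaternion ℝ := ⟨z.re, z.im, 0, 0⟩

/-- The quaternion `j = ⟨0, 0, 1, 0⟩`. -/
def jq : Quaternion ℝ := ⟨0, 0, 1, 0⟩

/-- The Möbius action of the matrix `[[a,b],[c,d]]` on the quaternions:
`q ↦ (a·q + b)·(c·q + d)⁻¹`. -/
def mob (a b c d : ℂ) (q : Quaternion ℝ) : Quaternion ℝ :=
  (toQ a * q + toQ b) * (toQ c * q + toQ d)⁻¹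

/-- Let `g = [[a,b],[c,d]] ∈ SL(2,ℂ)` with `c ≠ 0`, `q = z + t·j` with
`t > 0`, and write `g•q = z′ + t′·j`.  Set `λ = |cz+d|² + |c|²t²`.  Then
`|a − c·z′|² + |c|²·t′² = 1/λ`.  Consequently: if `q` lies on `I(g)` (`λ = 1`) then
`g•q` lies on `I(g⁻¹)`, and if `q` lies in the open half-ball `B(g)` (`λ < 1`) then
`g•q` lies in the exterior of the closed half-ball bounded by `I(g⁻¹)`. -/
theorem statement4 (a b c d : ℂ) (hdet : a * d - b * c = 1) (hc : c ≠ 0)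
    (z z' : ℂ) (t t' : ℝ) (ht : 0 < t)
    (himg : mob a b c d (toQ z + t • jq) = toQ z' + t' • jq) :
    ‖a - c * z'‖ ^ 2 + ‖c‖ ^ 2 * t' ^ 2 =
      1 / (‖c * z + d‖ ^ 2 + ‖c‖ ^ 2 * t ^ 2) ∧
    (‖c * z + d‖ ^ 2 + ‖c‖ ^ 2 * t ^ 2 = 1 →
      ‖a - c * z'‖ ^ 2 + ‖c‖ ^ 2 * t' ^ 2 = 1) ∧
    (‖c * z + d‖ ^ 2 + ‖c‖ ^ 2 * t ^ 2 < 1 →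
      1 < ‖a - c * z'‖ ^ 2 + ‖c‖ ^ 2 * t' ^ 2) := by
  -- the denominator is nonzero
  have hD : toQ c * (toQ z + t • jq) + toQ d ≠ 0 := by
    intro h
    rw [Quaternion.ext_iff] at h
    simp only [Quaternion.re_mul, Quaternion.imI_mul, Quaternion.imJ_mul,
      Quaternion.imK_mul, Quaternion.re_add, Quaternion.imI_add, Quaternion.imJ_add,
      Quaternion.imK_add, Quaternion.re_smul, Quaternion.imI_smul, Quaternion.imJ_smul,
      Quaternion.imK_smul, smul_eq_mul, Quaternion.re_zero, Quaternion.imI_zero,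
      Quaternion.imJ_zero, Quaternion.imK_zero] at h
    simp only [toQ, jq] at h
    obtain ⟨-, -, h3, h4⟩ := h
    ring_nf at h3 h4
    apply hc
    have hre : c.re = 0 := by
      rcases mul_eq_zero.mp (show c.re * t = 0 by linarith) with h | h
      · exact h
      · exact absurd h ht.ne'
    have him : c.im = 0 := by
      rcases mul_eq_zero.mp (show c.im * t = 0 by linarith) with h | h
      · exact h
      · exact absurd h ht.ne'
    rw [Complex.ext_iff]
    simp [hre, him]
  have H : toQ a * (toQ z + t • jq) + toQ b
      = (toQ z' + t' • jq) * (toQ c * (toQ z + t • jq) + toQ d) := by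
    rw [← himg, mob, inv_mul_cancel_right₀ hD]
  rw [Quaternion.ext_iff] at H
  simp only [Quaternion.re_mul, Quaternion.imI_mul, Quaternion.imJ_mul,
    Quaternion.imK_mul, Quaternion.re_add, Quaternion.imI_add, Quaternion.imJ_add,
    Quaternion.imK_add, Quaternion.re_smul, Quaternion.imI_smul, Quaternion.imJ_smul,
    Quaternion.imK_smul, smul_eq_mul] at H
  simp only [toQ, jq] at H
  obtain ⟨h1, h2, h3, h4⟩ := H
  -- complex form of the equations
  set K := starRingEnd ℂ with hK
  have E1 : a * z + b = z' * (c * z + d) - (t' : ℂ) * t * K c := by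
    apply Complex.ext <;>
      simp only [Complex.add_re, Complex.add_im, Complex.mul_re, Complex.mul_im,
        Complex.sub_re, Complex.sub_im, Complex.conj_re, Complex.conj_im,
        Complex.ofReal_re, Complex.ofReal_im, hK, Complex.neg_re, Complex.neg_im] <;>
      ring_nf <;> ring_nf at h1 h2 <;> linarith [h1, h2]
  have E2 : (a : ℂ) * t = z' * c * t + (t' : ℂ) * K (c * z + d) := by
    apply Complex.ext <;>
      simp only [Complex.add_re, Complex.add_im, Complex.mul_re, Complex.mul_im,
        Complex.conj_re, Complex.conj_im,
        Complex.ofReal_re, Complex.ofReal_im, hK, Complex.neg_re, Complex.neg_im] <;>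
      ring_nf <;> ring_nf at h3 h4 <;> linarith [h3, h4]
  clear h1 h2 h3 h4 himg hD
  -- key complex identities
  have hA : (t' : ℂ) * ((c * z + d) * K (c * z + d) + (t : ℂ) ^ 2 * (c * K c)) = (t : ℂ) := by
    linear_combination c * (t : ℂ) * E1 - (c * z + d) * E2 + (t : ℂ) * hdet
  have hE : (a - c * z') * (t : ℂ) = (t' : ℂ) * K (c * z + d) := by
    linear_combination E2
  have hE' : K (a - c * z') * (t : ℂ) = (t' : ℂ) * (c * z + d) := by
    have h := congrArg K hE
    simpa [map_mul, map_add, map_sub, Complex.conj_conj, Complex.conj_ofReal, hK] using h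
  have hB : (t : ℂ) ^ 2 * ((a - c * z') * K (a - c * z') + c * K c * (t' : ℂ) ^ 2)
      = (t' : ℂ) * (t : ℂ) := by
    linear_combination (K (a - c * z') * (t : ℂ)) * hE + ((t' : ℂ) * K (c * z + d)) * hE'
      + (t' : ℂ) * hA
  -- back to real statements
  have rA : t' * (Complex.normSq (c * z + d) + Complex.normSq c * t ^ 2) = t := by
    rw [Complex.mul_conj, Complex.mul_conj] at hA
    have h' : ((t' * (Complex.normSq (c * z + d) + Complex.normSq c * t ^ 2) : ℝ) : ℂ)
        = ((t : ℝ) : ℂ) := by push_cast; linear_combination hA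
    exact_mod_cast h'
  have rB : t ^ 2 * (Complex.normSq (a - c * z') + Complex.normSq c * t' ^ 2) = t' * t := by
    rw [Complex.mul_conj, Complex.mul_conj] at hB
    have h' : ((t ^ 2 * (Complex.normSq (a - c * z') + Complex.normSq c * t' ^ 2) : ℝ) : ℂ)
        = ((t' * t : ℝ) : ℂ) := by push_cast; linear_combination hB
    exact_mod_cast h'
  clear hA hB hE hE' E1 E2
  rw [Complex.sq_norm, Complex.sq_norm, Complex.sq_norm]
  have hLpos : 0 < Complex.normSq (c * z + d) + Complex.normSq c * t ^ 2 := by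
    have h1 := Complex.normSq_pos.mpr hc
    have h2 := Complex.normSq_nonneg (c * z + d)
    have h3 := mul_pos h1 (pow_pos ht 2)
    linarith
  have hMt : (Complex.normSq (a - c * z') + Complex.normSq c * t' ^ 2) * t = t' := by
    apply mul_left_cancel₀ ht.ne'
    linear_combination rB
  have key : (Complex.normSq (a - c * z') + Complex.normSq c * t' ^ 2) *
      (Complex.normSq (c * z + d) + Complex.normSq c * t ^ 2) = 1 := by
    apply mul_right_cancel₀ ht.ne'
    linear_combination (Complex.normSq (c * z + d) + Complex.normSq c * t ^ 2) * hMt + rA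
  refine ⟨?_, fun h => ?_, fun h => ?_⟩
  · rw [eq_div_iff hLpos.ne']; exact key
  · rw [h, mul_one] at key; exact key
  · nlinarith [key, hLpos]
end
end

section
/- (Shimizu–Leutbecher lemma.) Let Γ be a subgroup of SL(2,ℂ) that is discrete, i.e. the subspace topology Γ inherits from the matrix topology on SL(2,ℂ) is discrete. Suppose the parabolic translation [[1,ω],[0,1]] belongs to Γ for some ω ∈ ℂ with ω ≠ 0, and suppose [[a,b],[c,d]] ∈ Γ with c ≠ 0. Then 1/|c| ≤ |ω|. In other words, the radius 1/|c| of the isometric sphere of any element of Γ not fixing ∞ is at most the translation length |ω| of any nontrivial parabolic translation in Γ fixing ∞. -/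
open Matrix Filter Topology

/-- The topology on `SL(2,ℂ)` induced from the usual topology on `2×2` complex
matrices via the inclusion. -/
noncomputable instance : TopologicalSpace (Matrix.SpecialLinearGroup (Fin 2) ℂ) :=
  TopologicalSpace.induced (fun g => (g : Matrix (Fin 2) (Fin 2) ℂ)) inferInstance

namespace ShimizuAux

noncomputable def Tpar (ω : ℂ) : Matrix.SpecialLinearGroup (Fin 2) ℂ :=
  ⟨!![1, ω; 0, 1], by simp [Matrix.det_fin_two_of]⟩

lemma det_entries (M : Matrix.SpecialLinearGroup (Fin 2) ℂ) :
    M.1 0 0 * M.1 1 1 - M.1 0 1 * M.1 1 0 = 1 := by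
  have h2 := M.2; rw [Matrix.det_fin_two] at h2; exact h2

lemma conj00 (ω : ℂ) (M : Matrix.SpecialLinearGroup (Fin 2) ℂ) :
    ((M * Tpar ω * M⁻¹ : Matrix.SpecialLinearGroup (Fin 2) ℂ) : Matrix (Fin 2) (Fin 2) ℂ) 0 0
      = 1 - M.1 0 0 * M.1 1 0 * ω := by
  rw [Matrix.SpecialLinearGroup.coe_mul, Matrix.SpecialLinearGroup.coe_mul, Matrix.SpecialLinearGroup.coe_inv, Matrix.adjugate_fin_two]
  simp [Tpar, Matrix.mul_apply, Fin.sum_univ_succ]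
  linear_combination det_entries M

lemma conj01 (ω : ℂ) (M : Matrix.SpecialLinearGroup (Fin 2) ℂ) :
    ((M * Tpar ω * M⁻¹ : Matrix.SpecialLinearGroup (Fin 2) ℂ) : Matrix (Fin 2) (Fin 2) ℂ) 0 1
      = M.1 0 0 * M.1 0 0 * ω := by
  rw [Matrix.SpecialLinearGroup.coe_mul, Matrix.SpecialLinearGroup.coe_mul, Matrix.SpecialLinearGroup.coe_inv, Matrix.adjugate_fin_two]
  simp [Tpar, Matrix.mul_apply, Fin.sum_univ_succ]
  ring

lemma conj10 (ω : ℂ) (M : Matrix.SpecialLinearGroup (Fin 2) ℂ) :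
    ((M * Tpar ω * M⁻¹ : Matrix.SpecialLinearGroup (Fin 2) ℂ) : Matrix (Fin 2) (Fin 2) ℂ) 1 0
      = -(M.1 1 0 * M.1 1 0 * ω) := by
  rw [Matrix.SpecialLinearGroup.coe_mul, Matrix.SpecialLinearGroup.coe_mul, Matrix.SpecialLinearGroup.coe_inv, Matrix.adjugate_fin_two]
  simp [Tpar, Matrix.mul_apply, Fin.sum_univ_succ]
  ring

lemma conj11 (ω : ℂ) (M : Matrix.SpecialLinearGroup (Fin 2) ℂ) :
    ((M * Tpar ω * M⁻¹ : Matrix.SpecialLinearGroup (Fin 2) ℂ) : Matrix (Fin 2) (Fin 2) ℂ) 1 1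
      = 1 + M.1 0 0 * M.1 1 0 * ω := by
  rw [Matrix.SpecialLinearGroup.coe_mul, Matrix.SpecialLinearGroup.coe_mul, Matrix.SpecialLinearGroup.coe_inv, Matrix.adjugate_fin_two]
  simp [Tpar, Matrix.mul_apply, Fin.sum_univ_succ]
  linear_combination det_entries M

noncomputable def seq (ω : ℂ) (g : Matrix.SpecialLinearGroup (Fin 2) ℂ) :
    ℕ → Matrix.SpecialLinearGroup (Fin 2) ℂ
  | 0 => g
  | n + 1 => seq ω g n * Tpar ω * (seq ω g n)⁻¹

end ShimizuAux

open ShimizuAux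

/-- Shimizu–Leutbecher lemma: let `Γ ≤ SL(2,ℂ)` be discrete (in the
subspace topology from the matrix topology), containing the parabolic translation
`[[1,ω],[0,1]]` with `ω ≠ 0`.  If `[[a,b],[c,d]] ∈ Γ` with `c ≠ 0`, then
`1/|c| ≤ |ω|`: the radius of the isometric sphere of any element of `Γ` not fixing
`∞` is at most the translation length of the parabolic. -/
theorem statement6 (Γ : Subgroup (Matrix.SpecialLinearGroup (Fin 2) ℂ))
    (hdisc : DiscreteTopology Γ) (ω : ℂ) (hω : ω ≠ 0)
    (hpar : (⟨!![1, ω; 0, 1], by simp [Matrix.det_fin_two_of]⟩ :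
      Matrix.SpecialLinearGroup (Fin 2) ℂ) ∈ Γ)
    (g : Matrix.SpecialLinearGroup (Fin 2) ℂ) (hg : g ∈ Γ)
    (hc : (g : Matrix (Fin 2) (Fin 2) ℂ) 1 0 ≠ 0) :
    1 / ‖(g : Matrix (Fin 2) (Fin 2) ℂ) 1 0‖ ≤ ‖ω‖ := by
  by_contra hlt
  push_neg at hlt
  have hparT : Tpar ω ∈ Γ := hpar
  set f : ℕ → Matrix.SpecialLinearGroup (Fin 2) ℂ := seq ω g with hf
  set a : ℕ → ℂ := fun n => (f n : Matrix (Fin 2) (Fin 2) ℂ) 0 0 with ha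
  set c : ℕ → ℂ := fun n => (f n : Matrix (Fin 2) (Fin 2) ℂ) 1 0 with hcdef
  have hfs : ∀ n, f (n + 1) = f n * Tpar ω * (f n)⁻¹ := fun n => rfl
  have hmem : ∀ n, f n ∈ Γ := by
    intro n
    induction n with
    | zero => exact hg
    | succ n ih => rw [hfs]; exact Γ.mul_mem (Γ.mul_mem ih hparT) (Γ.inv_mem ih)
  have haS : ∀ n, a (n + 1) = 1 - a n * c n * ω := fun n => by
    rw [ha]; simp only [hfs]; exact conj00 ω (f n)
  have hcS : ∀ n, c (n + 1) = -(c n * c n * ω) := fun n => by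
    rw [hcdef]; simp only [hfs]; exact conj10 ω (f n)
  have hbS : ∀ n, (f (n + 1) : Matrix (Fin 2) (Fin 2) ℂ) 0 1 = a n * a n * ω := fun n => by
    simp only [hfs]; exact conj01 ω (f n)
  have hdS : ∀ n, (f (n + 1) : Matrix (Fin 2) (Fin 2) ℂ) 1 1 = 1 + a n * c n * ω := fun n => by
    simp only [hfs]; exact conj11 ω (f n)
  have hcne : ∀ n, c n ≠ 0 := by
    intro n
    induction n with
    | zero => exact hc
    | succ n ih =>
      rw [hcS]
      exact neg_ne_zero.mpr (mul_ne_zero (mul_ne_zero ih ih) hω)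
  -- the key ratio
  set r : ℝ := ‖c 0 * ω‖ with hr
  have hr0 : 0 ≤ r := norm_nonneg _
  have hr1 : r < 1 := by
    rw [hr, norm_mul]
    have hc0 : 0 < ‖c 0‖ := by
      exact norm_pos_iff.mpr hc
    calc ‖c 0‖ * ‖ω‖
        < ‖c 0‖ * (1 / ‖c 0‖) := by
          exact mul_lt_mul_of_pos_left hlt hc0
      _ = 1 := by field_simp
  have hkey : ∀ n, ‖c n * ω‖ ≤ r ^ (n + 1) := by
    intro n
    induction n with
    | zero => simp [hr]
    | succ n ih =>
      have e1 : c (n + 1) * ω = -((c n * ω) ^ 2) := by rw [hcS]; ring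
      have e2 : ‖c (n + 1) * ω‖ = ‖c n * ω‖ ^ 2 := by
        rw [e1, norm_neg, norm_pow]
      rw [e2]
      calc ‖c n * ω‖ ^ 2 ≤ (r ^ (n + 1)) ^ 2 := by
            exact pow_le_pow_left₀ (norm_nonneg _) ih 2
        _ = r ^ (2 * n + 2) := by ring
        _ ≤ r ^ (n + 2) := pow_le_pow_of_le_one hr0 hr1.le (by omega)
  have hkey1 : ∀ n, ‖c n * ω‖ ≤ 1 := by
    intro n
    calc ‖c n * ω‖ ≤ r ^ (n + 1) := hkey n
      _ ≤ 1 := pow_le_one₀ hr0 hr1.le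
  set A0 : ℝ := ‖a 0‖ with hA0
  have habound : ∀ n, ‖a n‖ ≤ A0 + n := by
    intro n
    induction n with
    | zero => simp [hA0]
    | succ n ih =>
      rw [haS]
      calc ‖1 - a n * c n * ω‖
          ≤ ‖(1 : ℂ)‖ + ‖a n * c n * ω‖ := by
            exact norm_sub_le _ _
        _ = 1 + ‖a n‖ * ‖c n * ω‖ := by
            rw [norm_one, mul_assoc, norm_mul]
        _ ≤ 1 + (A0 + n) * 1 := by
            have h9 := mul_le_mul ih (hkey1 n) (norm_nonneg _) (by positivity)
            linarith
        _ = A0 + (n + 1 : ℕ) := by push_cast; ring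
  have hprod : ∀ n, ‖a n * c n * ω‖ ≤ (A0 + n) * r ^ (n + 1) := by
    intro n
    rw [mul_assoc, norm_mul]
    exact mul_le_mul (habound n) (hkey n) (norm_nonneg _) (by positivity)
  -- the bounding sequence tends to 0
  have h2 : Tendsto (fun n : ℕ => r ^ n) atTop (𝓝 0) :=
    tendsto_pow_atTop_nhds_zero_of_lt_one hr0 hr1
  have h1 : Tendsto (fun n : ℕ => (n : ℝ) * r ^ n) atTop (𝓝 0) :=
    tendsto_self_mul_const_pow_of_lt_one hr0 hr1
  have hb : Tendsto (fun n : ℕ => (A0 + n) * r ^ (n + 1)) atTop (𝓝 0) := by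
    have h3 : Tendsto (fun n : ℕ => r * (A0 * r ^ n + n * r ^ n)) atTop
        (𝓝 (r * (A0 * 0 + 0))) := (((h2.const_mul A0).add h1).const_mul r)
    have h4 : r * (A0 * 0 + 0) = 0 := by ring
    rw [h4] at h3
    exact h3.congr (fun n => by ring)
  have hT1 : Tendsto (fun n => a n * c n * ω) atTop (𝓝 0) :=
    squeeze_zero_norm (fun n => by exact hprod n) hb
  have hbr : Tendsto (fun n : ℕ => r ^ (n + 1)) atTop (𝓝 0) :=
    h2.comp (tendsto_add_atTop_nat 1)
  have hT2 : Tendsto (fun n => c n * ω) atTop (𝓝 0) :=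
    squeeze_zero_norm (fun n => by exact hkey n) hbr
  have hTc : Tendsto c atTop (𝓝 0) := by
    have := hT2.mul_const ω⁻¹
    rw [zero_mul] at this
    exact this.congr (fun n => by field_simp)
  have hT1' : Tendsto (fun n => a (n + 1) * c (n + 1) * ω) atTop (𝓝 0) :=
    hT1.comp (tendsto_add_atTop_nat 1)
  have hTa1 : Tendsto (fun n => a (n + 1)) atTop (𝓝 1) := by
    have h5 : Tendsto (fun n => (1 : ℂ) - a n * c n * ω) atTop (𝓝 (1 - 0)) :=
      tendsto_const_nhds.sub hT1
    rw [sub_zero] at h5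
    exact h5.congr (fun n => (haS n).symm)
  -- the shifted sequence converges to Tpar ω entrywise
  have hA : Tendsto (fun n => (f (n + 2) : Matrix (Fin 2) (Fin 2) ℂ) 0 0) atTop (𝓝 1) :=
    hTa1.comp (tendsto_add_atTop_nat 1)
  have hC : Tendsto (fun n => (f (n + 2) : Matrix (Fin 2) (Fin 2) ℂ) 1 0) atTop (𝓝 0) :=
    hTc.comp (tendsto_add_atTop_nat 2)
  have hB : Tendsto (fun n => (f (n + 2) : Matrix (Fin 2) (Fin 2) ℂ) 0 1) atTop (𝓝 ω) := by
    have h6 : Tendsto (fun n => a (n + 1) * a (n + 1) * ω) atTop (𝓝 (1 * 1 * ω)) :=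
      (hTa1.mul hTa1).mul_const ω
    rw [one_mul, one_mul] at h6
    exact h6.congr (fun n => (hbS (n + 1)).symm)
  have hD : Tendsto (fun n => (f (n + 2) : Matrix (Fin 2) (Fin 2) ℂ) 1 1) atTop (𝓝 1) := by
    have h7 : Tendsto (fun n => (1 : ℂ) + a (n + 1) * c (n + 1) * ω) atTop (𝓝 (1 + 0)) :=
      tendsto_const_nhds.add hT1'
    rw [add_zero] at h7
    exact h7.congr (fun n => (hdS (n + 1)).symm)
  have hmat : Tendsto (fun n => (f (n + 2) : Matrix (Fin 2) (Fin 2) ℂ)) atTop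
      (𝓝 ((Tpar ω : Matrix (Fin 2) (Fin 2) ℂ))) := by
    refine tendsto_pi_nhds.mpr ?_
    intro i
    refine tendsto_pi_nhds.mpr ?_
    intro j
    fin_cases i <;> fin_cases j
    · simpa [Tpar] using hA
    · simpa [Tpar] using hB
    · simpa [Tpar] using hC
    · simpa [Tpar] using hD
  -- lift to SL(2, C)
  have hSL : Tendsto (fun n => f (n + 2)) atTop (𝓝 (Tpar ω)) := by
    rw [nhds_induced (fun g : Matrix.SpecialLinearGroup (Fin 2) ℂ =>
      (g : Matrix (Fin 2) (Fin 2) ℂ)), tendsto_comap_iff]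
    exact hmat
  -- lift to Γ
  have hGam : Tendsto (fun n => (⟨f (n + 2), hmem (n + 2)⟩ : Γ)) atTop
      (𝓝 (⟨Tpar ω, hparT⟩ : Γ)) := by
    rw [tendsto_subtype_rng]
    exact hSL
  rw [nhds_discrete, tendsto_pure] at hGam
  obtain ⟨n, hn⟩ := hGam.exists
  have hfn : f (n + 2) = Tpar ω := congrArg Subtype.val hn
  have : c (n + 2) = 0 := by
    rw [hcdef]
    simp only [hfn]
    simp [Tpar]
  exact hcne (n + 2) this
end

section
/- Let b ∈ ℂ with Im b > 0, |Re b| ≤ 1/2, and |b| ≥ 1 (so that 1 is a shortest nonzero vector of the lattice Λ = ℤ·1 + ℤ·b, and b is a shortest vector of Λ independent of 1). Let y ∈ ℂ satisfy |y| ≤ |y − (m + n·b)| for all integers m, n (i.e. y is at least as close to 0 as to every other lattice point). Then for all integers p, q: if |y − (p + q·b)| < 2, then |p| ≤ 3 and |q| ≤ 3. -/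
set_option maxHeartbeats 2000000 in
/-- Let `b ∈ ℂ` with `Im b > 0`, `|Re b| ≤ 1/2` and `|b| ≥ 1`, so that
`1` is a shortest nonzero vector of the lattice `ℤ + ℤ·b` and `b` a shortest vector
independent of `1`.  If `y ∈ ℂ` is at least as close to `0` as to every other point
of the lattice, then every lattice point `p + q·b` at distance less than `2` from `y`
satisfies `|p| ≤ 3` and `|q| ≤ 3`. -/
theorem statement7 (b : ℂ) (him : 0 < b.im) (hre : |b.re| ≤ 1 / 2)
    (hnorm : 1 ≤ ‖b‖) (y : ℂ)
    (hy : ∀ m n : ℤ, ‖y‖ ≤ ‖y - ((m : ℂ) + (n : ℂ) * b)‖) :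
    ∀ p q : ℤ, ‖y - ((p : ℂ) + (q : ℂ) * b)‖ < 2 → |p| ≤ 3 ∧ |q| ≤ 3 := by
  intro p q hpq
  have key : ∀ m n : ℤ, y.re^2 + y.im^2 ≤
      (y.re - ((m : ℝ) + (n : ℝ) * b.re))^2 + (y.im - (n : ℝ) * b.im)^2 := by
    intro m n
    have h := hy m n
    have h2 : (‖y‖)^2 ≤ (‖y - ((m : ℂ) + (n : ℂ) * b)‖)^2 :=
      pow_le_pow_left₀ (norm_nonneg y) h 2
    rw [Complex.sq_norm, Complex.sq_norm] at h2
    simp only [Complex.normSq_apply, Complex.sub_re, Complex.sub_im, Complex.add_re,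
      Complex.add_im, Complex.mul_re, Complex.mul_im, Complex.intCast_re,
      Complex.intCast_im] at h2
    nlinarith [h2]
  have hpq2 : (y.re - ((p : ℝ) + (q : ℝ) * b.re))^2 + (y.im - (q : ℝ) * b.im)^2 < 4 := by
    have h2 : (‖y - ((p : ℂ) + (q : ℂ) * b)‖)^2 < 4 := by
      nlinarith [norm_nonneg (y - ((p : ℂ) + (q : ℂ) * b)), hpq]
    rw [Complex.sq_norm] at h2
    simp only [Complex.normSq_apply, Complex.sub_re, Complex.sub_im, Complex.add_re,
      Complex.add_im, Complex.mul_re, Complex.mul_im, Complex.intCast_re,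
      Complex.intCast_im] at h2
    nlinarith [h2]
  have hr := abs_le.mp hre
  have hb2 : (3:ℝ)/4 ≤ b.im^2 := by
    have h2 : 1 ≤ b.re^2 + b.im^2 := by
      have h := Complex.sq_norm b
      rw [Complex.normSq_apply] at h
      nlinarith [hnorm]
    nlinarith [hr.1, hr.2]
  have hu1 : y.re ≤ 1/2 := by have := key 1 0; push_cast at this; nlinarith [this]
  have hu2 : -(1/2) ≤ y.re := by have := key (-1) 0; push_cast at this; nlinarith [this]
  have hv1 : 2*(y.re * b.re + y.im * b.im) ≤ b.re^2 + b.im^2 := by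
    have := key 0 1; push_cast at this; nlinarith [this]
  have hv2 : -(2*(y.re * b.re + y.im * b.im)) ≤ b.re^2 + b.im^2 := by
    have := key 0 (-1); push_cast at this; nlinarith [this]
  have hur : |y.re * b.re| ≤ 1/4 := by
    rw [abs_mul]
    calc |y.re| * |b.re| ≤ (1/2) * (1/2) := by
          apply mul_le_mul (abs_le.mpr ⟨hu2, hu1⟩) hre (abs_nonneg _) (by norm_num)
      _ = 1/4 := by norm_num
  have hur' := abs_le.mp hur
  have hr2 : b.re^2 ≤ 1/4 := by nlinarith [hr.1, hr.2]
  have hvt1 : 2 * y.im * b.im ≤ b.im^2 + 3/4 := by linarith [hv1, hur'.1, hr2]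
  have hvt2 : -(2 * y.im * b.im) ≤ b.im^2 + 3/4 := by linarith [hv2, hur'.2, hr2]
  have hq : |q| ≤ 3 := by
    by_contra hc
    push_neg at hc
    have h5 : (y.im - (q:ℝ)*b.im)^2 < 4 := by
      linarith [hpq2, sq_nonneg (y.re - ((p:ℝ) + (q:ℝ) * b.re))]
    rcases abs_cases q with ⟨h1, h2⟩ | ⟨h1, h2⟩
    · have hq4 : (4:ℝ) ≤ (q:ℝ) := by exact_mod_cast (by omega : (4:ℤ) ≤ q)
      have hM : (0:ℝ) ≤ ((q:ℝ)^2 - q) * (b.im^2 - 3/4) :=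
        mul_nonneg (by nlinarith) (by linarith)
      have hQvt : (q:ℝ) * (2*y.im*b.im) ≤ (q:ℝ) * (b.im^2 + 3/4) :=
        mul_le_mul_of_nonneg_left hvt1 (by linarith)
      nlinarith [h5, hM, hQvt, sq_nonneg ((q:ℝ) - 4), sq_nonneg y.im, hq4]
    · have hq4 : (q:ℝ) ≤ -4 := by exact_mod_cast (by omega : q ≤ (-4:ℤ))
      have hM : (0:ℝ) ≤ ((q:ℝ)^2 + q) * (b.im^2 - 3/4) :=
        mul_nonneg (by nlinarith) (by linarith)
      have hQvt : (-(q:ℝ)) * (-(2*y.im*b.im)) ≤ (-(q:ℝ)) * (b.im^2 + 3/4) :=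
        mul_le_mul_of_nonneg_left hvt2 (by linarith)
      nlinarith [h5, hM, hQvt, sq_nonneg ((q:ℝ) + 4), sq_nonneg y.im, hq4]
  refine ⟨?_, hq⟩
  have hqr := abs_le.mp hq
  have hqbr : |(q:ℝ) * b.re| ≤ 3/2 := by
    rw [abs_mul]
    have h1 : |(q:ℝ)| ≤ 3 := by
      rw [← Int.cast_abs]; exact_mod_cast hq
    calc |(q:ℝ)| * |b.re| ≤ 3 * (1/2) := by
          apply mul_le_mul h1 hre (abs_nonneg _) (by norm_num)
      _ = 3/2 := by norm_num
  have hqbr' := abs_le.mp hqbr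
  by_contra hc
  push_neg at hc
  rcases abs_cases p with ⟨h1, h2⟩ | ⟨h1, h2⟩
  · have hp4 : (4:ℝ) ≤ (p:ℝ) := by exact_mod_cast (by omega : (4:ℤ) ≤ p)
    nlinarith [hpq2, sq_nonneg (y.im - (q:ℝ) * b.im), hu1, hu2, hqbr'.1, hqbr'.2, hp4]
  · have hp4 : (p:ℝ) ≤ -4 := by exact_mod_cast (by omega : p ≤ (-4:ℤ))
    nlinarith [hpq2, sq_nonneg (y.im - (q:ℝ) * b.im), hu1, hu2, hqbr'.1, hqbr'.2, hp4]
end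

section
/- Let t₋ < t₊ be real numbers, and let x₁, x₂ : ℝ → ℂ and r₁, r₂ : ℝ → ℝ be real analytic on an open set containing [t₋, t₊], with r₁(t) > 0 and r₂(t) > 0 for all t ∈ [t₋, t₊]. Then the set of times at which the second disk is covered by the first, {t ∈ [t₋, t₊] : closedBall(x₂(t), r₂(t)) ⊆ closedBall(x₁(t), r₁(t))} (closed balls taken in ℂ), is a finite union of closed intervals and points: there exist n ∈ ℕ and aᵢ ≤ bᵢ (i = 1, …, n) with [aᵢ, bᵢ] ⊆ [t₋, t₊] whose union is this set. -/
open Set Metric Filter Topology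

section helpers

-- closed ball containment criterion in ℂ
lemma cball_iff {c₁ c₂ : ℂ} {R r : ℝ} (hr : 0 ≤ r) :
    closedBall c₂ r ⊆ closedBall c₁ R ↔ dist c₁ c₂ + r ≤ R := by
  constructor
  · intro h
    by_cases hc : c₂ = c₁
    · subst hc
      have := h (mem_closedBall.2 (le_of_eq (by
        simp [Complex.dist_eq, abs_of_nonneg hr] : dist (c₂ + r) c₂ = r)))
      simp only [mem_closedBall, Complex.dist_eq] at this
      simp only [add_sub_cancel_left, Complex.norm_real, Real.norm_eq_abs, abs_of_nonneg hr] at this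
      simpa using this
    · have hd : (0:ℝ) < dist c₂ c₁ := dist_pos.2 hc
      set z : ℂ := c₂ + (r / dist c₂ c₁) • (c₂ - c₁) with hz
      have hzc₂ : dist z c₂ = r := by
        rw [dist_eq_norm]
        simp only [hz, add_sub_cancel_left, norm_smul]
        rw [Real.norm_eq_abs, abs_of_nonneg (div_nonneg hr hd.le)]
        rw [show ‖c₂ - c₁‖ = dist c₂ c₁ from (dist_eq_norm _ _).symm]
        field_simp
      have hzmem : z ∈ closedBall c₂ r := mem_closedBall.2 hzc₂.le
      have hzc₁ : dist z c₁ = dist c₂ c₁ + r := by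
        rw [dist_eq_norm]
        have : z - c₁ = (1 + r / dist c₂ c₁) • (c₂ - c₁) := by
          simp only [hz]; module
        rw [this, norm_smul, Real.norm_eq_abs,
          abs_of_nonneg (by positivity : (0:ℝ) ≤ 1 + r / dist c₂ c₁),
          show ‖c₂ - c₁‖ = dist c₂ c₁ from (dist_eq_norm _ _).symm]
        field_simp
      have := mem_closedBall.1 (h hzmem)
      rw [hzc₁] at this
      rw [dist_comm]
      linarith
  · intro h z hz
    rw [mem_closedBall] at hz ⊢
    calc dist z c₁ ≤ dist z c₂ + dist c₂ c₁ := dist_triangle _ _ _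
      _ ≤ r + dist c₂ c₁ := by linarith
      _ ≤ R := by rw [dist_comm] at h; linarith
/-- A closed sublevel set `{ψ ≤ 0}` of a continuous function on `[tm, tp]` whose zero set
is finite is a finite union of closed intervals. -/
lemma lemB {tm tp : ℝ} (htt : tm ≤ tp) {ψ : ℝ → ℝ} (hψ : ContinuousOn ψ (Icc tm tp))
    (hfin : {t ∈ Icc tm tp | ψ t = 0}.Finite) :
    ∃ (n : ℕ) (a b : Fin n → ℝ),
      (∀ i, a i ≤ b i) ∧ (∀ i, Icc (a i) (b i) ⊆ Icc tm tp) ∧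
      {t ∈ Icc tm tp | ψ t ≤ 0} = ⋃ i, Icc (a i) (b i) := by
  classical
  set S := {t ∈ Icc tm tp | ψ t ≤ 0} with hS
  have hSsub : S ⊆ Icc tm tp := fun t ht => ht.1
  set Fs : Finset ℝ := insert tm (insert tp hfin.toFinset) with hFs
  have hFsIcc : ∀ z ∈ Fs, z ∈ Icc tm tp := by
    intro z hz
    simp only [hFs, Finset.mem_insert, Set.Finite.mem_toFinset] at hz
    rcases hz with rfl | rfl | hz
    · exact left_mem_Icc.2 htt
    · exact right_mem_Icc.2 htt
    · exact hz.1
  -- key claim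
  have key : ∀ t ∈ S, ∃ p ∈ Fs, ∃ q ∈ Fs, p ≤ t ∧ t ≤ q ∧ Icc p q ⊆ S := by
    intro t ht
    have htI : t ∈ Icc tm tp := ht.1
    have hA : (Fs.filter (· ≤ t)).Nonempty :=
      ⟨tm, Finset.mem_filter.2 ⟨by simp [hFs], htI.1⟩⟩
    have hB : (Fs.filter (t ≤ ·)).Nonempty :=
      ⟨tp, Finset.mem_filter.2 ⟨by simp [hFs], htI.2⟩⟩
    set p := (Fs.filter (· ≤ t)).max' hA with hp
    set q := (Fs.filter (t ≤ ·)).min' hB with hq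
    have hpmem := Finset.mem_filter.1 ((Fs.filter (· ≤ t)).max'_mem hA)
    have hqmem := Finset.mem_filter.1 ((Fs.filter (t ≤ ·)).min'_mem hB)
    refine ⟨p, hpmem.1, q, hqmem.1, hpmem.2, hqmem.2, ?_⟩
    intro s hs
    have hpI := hFsIcc p hpmem.1
    have hqI := hFsIcc q hqmem.1
    have hsI : s ∈ Icc tm tp := ⟨hpI.1.trans hs.1, hs.2.trans hqI.2⟩
    refine ⟨hsI, ?_⟩
    by_contra hpos
    push_neg at hpos
    have htψ : ψ t ≤ 0 := ht.2
    have hts : t ≠ s := fun h => absurd (h ▸ htψ) (not_le.2 hpos)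
    rcases lt_or_gt_of_ne hts with hlt | hgt
    · -- t < s : find a zero in [t, s]
      have hsub : Icc t s ⊆ Icc tm tp := Icc_subset_Icc htI.1 hsI.2
      have h0 : (0:ℝ) ∈ Icc (ψ t) (ψ s) := ⟨htψ, hpos.le⟩
      obtain ⟨c, hc, hc0⟩ := intermediate_value_Icc hlt.le (hψ.mono hsub) h0
      have hcZ : c ∈ Fs := by
        simp only [hFs, Finset.mem_insert, Set.Finite.mem_toFinset]
        exact Or.inr (Or.inr ⟨hsub hc, hc0⟩)
      have hcs : c < s := lt_of_le_of_ne hc.2 (fun h => by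
        rw [h] at hc0; exact absurd hc0 (ne_of_gt hpos))
      have : q ≤ c := Finset.min'_le _ _ (Finset.mem_filter.2 ⟨hcZ, hc.1⟩)
      exact absurd (hs.2.trans this) (not_le.2 hcs)
    · -- s < t : find a zero in [s, t]
      have hsub : Icc s t ⊆ Icc tm tp := Icc_subset_Icc hsI.1 htI.2
      have h0 : (0:ℝ) ∈ Icc (ψ t) (ψ s) := ⟨htψ, hpos.le⟩
      obtain ⟨c, hc, hc0⟩ := intermediate_value_Icc' hgt.le (hψ.mono hsub) h0
      have hcZ : c ∈ Fs := by
        simp only [hFs, Finset.mem_insert, Set.Finite.mem_toFinset]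
        exact Or.inr (Or.inr ⟨hsub hc, hc0⟩)
      have hcs : s < c := lt_of_le_of_ne hc.1 (fun h => by
        rw [← h] at hc0; exact absurd hc0 (ne_of_gt hpos))
      have : c ≤ p := Finset.le_max' (Fs.filter (· ≤ t)) c (Finset.mem_filter.2 ⟨hcZ, hc.2⟩)
      exact absurd (this.trans hs.1) (not_le.2 hcs)
  -- assemble the finite collection of intervals
  set P : Set (ℝ × ℝ) := {z | z.1 ∈ Fs ∧ z.2 ∈ Fs ∧ z.1 ≤ z.2 ∧ Icc z.1 z.2 ⊆ S} with hP
  have hPfin : P.Finite := by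
    apply ((Fs ×ˢ Fs).finite_toSet).subset
    intro z hz
    simp only [Finset.coe_product, Set.mem_prod, Finset.mem_coe]
    exact ⟨hz.1, hz.2.1⟩
  set Pf := hPfin.toFinset with hPf
  refine ⟨Pf.card, fun i => ((Pf.equivFin.symm i : Pf) : ℝ × ℝ).1,
    fun i => ((Pf.equivFin.symm i : Pf) : ℝ × ℝ).2, ?_, ?_, ?_⟩
  · intro i
    have := hPfin.mem_toFinset.1 (Pf.equivFin.symm i).2
    exact this.2.2.1
  · intro i
    have hmem := hPfin.mem_toFinset.1 (Pf.equivFin.symm i).2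
    exact hmem.2.2.2.trans hSsub
  · apply Subset.antisymm
    · intro t ht
      obtain ⟨p, hpF, q, hqF, hpt, htq, hsub⟩ := key t ht
      have hPz : (p, q) ∈ Pf :=
        hPfin.mem_toFinset.2 ⟨hpF, hqF, hpt.trans htq, hsub⟩
      refine mem_iUnion.2 ⟨Pf.equivFin ⟨(p, q), hPz⟩, ?_⟩
      simp only [Equiv.symm_apply_apply]
      exact ⟨hpt, htq⟩
    · refine iUnion_subset fun i => ?_
      have hmem := hPfin.mem_toFinset.1 (Pf.equivFin.symm i).2
      exact hmem.2.2.2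
lemma idthm {tm tp : ℝ} {f : ℝ → ℝ} (hf : AnalyticOnNhd ℝ f (Icc tm tp))
    (hinf : {t ∈ Icc tm tp | f t = 0}.Infinite) : EqOn f 0 (Icc tm tp) := by
  obtain ⟨z₀, hz₀, hacc⟩ := hinf.exists_accPt_of_subset_isCompact isCompact_Icc
    (fun t ht => ht.1)
  have hfreq : ∃ᶠ z in 𝓝[≠] z₀, f z = 0 := by
    rw [frequently_nhdsWithin_iff]
    exact ((accPt_iff_frequently).1 hacc).mono fun y hy => ⟨hy.2.2, hy.1⟩
  exact hf.eqOn_zero_of_preconnected_of_frequently_eq_zero isPreconnected_Icc hz₀ hfreq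

end helpers

/-- Lemma 5.3: Let `x₁, x₂ : ℝ → ℂ` and `r₁, r₂ : ℝ → ℝ` be real
analytic on an open set containing `[t₋, t₊]`, with `r₁, r₂ > 0` on the interval.
Then the set of times at which the closed disk of center `x₂ t` and radius `r₂ t`
is contained in the closed disk of center `x₁ t` and radius `r₁ t` is a finite
union of closed intervals and points in `[t₋, t₊]`. -/
theorem statement10 (tm tp : ℝ) (htt : tm < tp) (U : Set ℝ) (hU : IsOpen U)
    (hIcc : Icc tm tp ⊆ U)
    (x₁ x₂ : ℝ → ℂ) (r₁ r₂ : ℝ → ℝ)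
    (hx₁ : AnalyticOnNhd ℝ x₁ U) (hx₂ : AnalyticOnNhd ℝ x₂ U)
    (hr₁ : AnalyticOnNhd ℝ r₁ U) (hr₂ : AnalyticOnNhd ℝ r₂ U)
    (hr₁pos : ∀ t ∈ Icc tm tp, 0 < r₁ t) (hr₂pos : ∀ t ∈ Icc tm tp, 0 < r₂ t) :
    ∃ (n : ℕ) (a b : Fin n → ℝ),
      (∀ i, a i ≤ b i) ∧ (∀ i, Icc (a i) (b i) ⊆ Icc tm tp) ∧
      {t ∈ Icc tm tp | closedBall (x₂ t) (r₂ t) ⊆ closedBall (x₁ t) (r₁ t)} =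
        ⋃ i, Icc (a i) (b i) := by
  -- the comparison function φ and the auxiliary analytic function h
  set φ : ℝ → ℝ := fun t => dist (x₁ t) (x₂ t) + r₂ t - r₁ t with hφdef
  set h : ℝ → ℝ := fun t =>
    (r₁ t - r₂ t) ^ 2 - ((x₁ t - x₂ t).re ^ 2 + (x₁ t - x₂ t).im ^ 2) with hhdef
  have hq : AnalyticOnNhd ℝ (fun t => x₁ t - x₂ t) U := hx₁.sub hx₂
  have hre : AnalyticOnNhd ℝ (fun t => (x₁ t - x₂ t).re) U :=
    Complex.reCLM.comp_analyticOnNhd hq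
  have him : AnalyticOnNhd ℝ (fun t => (x₁ t - x₂ t).im) U :=
    Complex.imCLM.comp_analyticOnNhd hq
  have hh : AnalyticOnNhd ℝ h U :=
    ((hr₁.sub hr₂).pow 2).sub ((hre.pow 2).add (him.pow 2))
  have hφc : ContinuousOn φ (Icc tm tp) := by
    have hφeq : φ = fun t => ‖x₁ t - x₂ t‖ + r₂ t - r₁ t := by
      funext t
      show dist (x₁ t) (x₂ t) + r₂ t - r₁ t = _
      rw [dist_eq_norm]
    rw [hφeq]
    exact ((((hx₁.continuousOn.mono hIcc).sub (hx₂.continuousOn.mono hIcc)).norm).add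
      (hr₂.continuousOn.mono hIcc)).sub (hr₁.continuousOn.mono hIcc)
  have hsq : ∀ t, (x₁ t - x₂ t).re ^ 2 + (x₁ t - x₂ t).im ^ 2 =
      (dist (x₁ t) (x₂ t)) ^ 2 := by
    intro t
    rw [Complex.dist_eq, Complex.sq_norm, Complex.normSq_apply]
    ring
  -- rewrite the covering set using φ
  have hset : {t ∈ Icc tm tp | closedBall (x₂ t) (r₂ t) ⊆ closedBall (x₁ t) (r₁ t)} =
      {t ∈ Icc tm tp | φ t ≤ 0} := by
    ext t
    simp only [mem_setOf_eq]
    refine and_congr_right fun htI => ?_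
    rw [cball_iff (hr₂pos t htI).le, hφdef]
    constructor <;> intro h' <;> [skip; skip] <;> dsimp only at * <;> linarith
  by_cases hcase : {t ∈ Icc tm tp | h t = 0}.Finite
  · -- finitely many zeros of h : the zeros of φ are among them
    have hφfin : {t ∈ Icc tm tp | φ t = 0}.Finite := by
      apply hcase.subset
      intro t ht
      refine ⟨ht.1, ?_⟩
      have h0 : dist (x₁ t) (x₂ t) = r₁ t - r₂ t := by
        have := ht.2
        rw [hφdef] at this
        dsimp only at this
        linarith
      rw [hhdef]
      dsimp only
      rw [hsq, h0]
      ring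
    rw [hset]
    exact lemB htt.le hφc hφfin
  · -- h vanishes identically on the interval
    have hEqh : EqOn h 0 (Icc tm tp) :=
      idthm (fun t ht => hh t (hIcc ht)) hcase
    have hdist : ∀ t ∈ Icc tm tp, dist (x₁ t) (x₂ t) = |r₁ t - r₂ t| := by
      intro t ht
      have h0 := hEqh ht
      rw [hhdef] at h0
      simp only [Pi.zero_apply] at h0
      have h1 : (dist (x₁ t) (x₂ t)) ^ 2 = (r₁ t - r₂ t) ^ 2 := by
        rw [← hsq]; linarith
      calc dist (x₁ t) (x₂ t) = √((dist (x₁ t) (x₂ t)) ^ 2) :=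
            (Real.sqrt_sq dist_nonneg).symm
        _ = √((r₁ t - r₂ t) ^ 2) := by rw [h1]
        _ = |r₁ t - r₂ t| := Real.sqrt_sq_eq_abs _
    have hset2 : {t ∈ Icc tm tp | closedBall (x₂ t) (r₂ t) ⊆ closedBall (x₁ t) (r₁ t)} =
        {t ∈ Icc tm tp | r₂ t - r₁ t ≤ 0} := by
      rw [hset]
      ext t
      simp only [mem_setOf_eq]
      refine and_congr_right fun htI => ?_
      rw [hφdef]
      dsimp only
      rw [hdist t htI]
      rcases abs_cases (r₁ t - r₂ t) with ⟨he, h2⟩ | ⟨he, h2⟩ <;> rw [he] <;>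
        constructor <;> intro <;> linarith
    by_cases hcase2 : {t ∈ Icc tm tp | r₂ t - r₁ t = 0}.Finite
    · rw [hset2]
      exact lemB htt.le ((hr₂.continuousOn.mono hIcc).sub (hr₁.continuousOn.mono hIcc))
        hcase2
    · -- r₂ - r₁ vanishes identically : the covering set is the whole interval
      have hEqg : EqOn (fun t => r₂ t - r₁ t) 0 (Icc tm tp) :=
        idthm (fun t ht => (hr₂.sub hr₁) t (hIcc ht)) hcase2
      refine ⟨1, fun _ => tm, fun _ => tp, fun _ => htt.le, fun _ => subset_rfl, ?_⟩
      rw [hset2]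
      rw [iUnion_const]
      ext t
      simp only [mem_setOf_eq]
      exact ⟨fun h => h.1, fun h => ⟨h, le_of_eq (hEqg h)⟩⟩
end
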